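/- arXiv:2412.09200 — 3 statements merged into one kernel-verified Lean document; each statement's English description precedes it below -/
import Mathlib

section
/- Let μ be a finite measure on a measurable space X with μ(X) > 0 and let φ : X → ℝ be measurable and bounded. Then for every λ > 0, the Gibbs average (∫ φ(p) e^{−λφ(p)} dμ(p)) / (∫ e^{−λφ(p)} dμ(p)) is greater than or equal to the μ-essential infimum φ* of φ, and it tends to φ* as λ → ∞. -/
open Real MeasureTheory Filter

/-- For a finite measure μ with μ(X) > 0 and measurable bounded φ,
the Gibbs average (∫ φ e^{−λφ} dμ) / (∫ e^{−λφ} dμ) is ≥ the μ-essential infimum φ*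
of φ for every λ > 0, and tends to φ* as λ → ∞. -/
theorem gibbs_average_ge_and_tendsto_essInf
    {X : Type*} [MeasurableSpace X] (μ : Measure X) [IsFiniteMeasure μ]
    (hμ : 0 < μ Set.univ)
    (φ : X → ℝ) (hφm : Measurable φ) (Cφ : ℝ) (hφb : ∀ x, |φ x| ≤ Cφ) :
    (∀ lam : ℝ, 0 < lam →
      essInf φ μ ≤
        (∫ p, φ p * Real.exp (-lam * φ p) ∂μ) /
          (∫ p, Real.exp (-lam * φ p) ∂μ)) ∧
    Tendsto (fun lam : ℝ =>
        (∫ p, φ p * Real.exp (-lam * φ p) ∂μ) /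
          (∫ p, Real.exp (-lam * φ p) ∂μ))
      atTop (nhds (essInf φ μ)) := by
  have hμ0 : μ ≠ 0 := by intro h; rw [h] at hμ; simp at hμ
  have hne : NeBot (ae μ) := ae_neBot.2 hμ0
  set m := essInf φ μ with hm
  have hbd : IsBoundedUnder (· ≥ ·) (ae μ) φ :=
    ⟨-Cφ, eventually_map.2 (ae_of_all _ fun x => neg_le_of_abs_le (hφb x))⟩
  have hml : ∀ᵐ x ∂μ, m ≤ φ x := ae_essInf_le hbd
  have hbd' : IsBoundedUnder (· ≤ ·) (ae μ) φ :=
    ⟨Cφ, eventually_map.2 (ae_of_all _ fun x => le_of_abs_le (hφb x))⟩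
  have hle_essInf : ∀ c : ℝ, (∀ᵐ x ∂μ, c ≤ φ x) → c ≤ m := fun c hc =>
    le_liminf_of_le hbd'.isCoboundedUnder_ge hc
  have hmub : m ≤ Cφ := by
    obtain ⟨x, hx⟩ := hml.exists
    exact hx.trans (le_of_abs_le (hφb x))
  have hmlb : -Cφ ≤ m := hle_essInf _ (ae_of_all _ fun x => neg_le_of_abs_le (hφb x))
  have hCpos : 0 ≤ Cφ := by linarith
  have hexp_le : ∀ (lam : ℝ) (x : X), Real.exp (-lam * φ x) ≤ Real.exp (|lam| * Cφ) := by
    intro lam x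
    refine Real.exp_le_exp.2 ?_
    calc -lam * φ x ≤ |(-lam) * φ x| := le_abs_self _
      _ = |lam| * |φ x| := by rw [abs_mul, abs_neg]
      _ ≤ |lam| * Cφ := mul_le_mul_of_nonneg_left (hφb x) (abs_nonneg _)
  have hint_e : ∀ lam : ℝ, Integrable (fun x => Real.exp (-lam * φ x)) μ := by
    intro lam
    refine ⟨((hφm.const_mul (-lam)).exp).aestronglyMeasurable,
      HasFiniteIntegral.of_bounded (C := Real.exp (|lam| * Cφ)) (ae_of_all _ fun x => ?_)⟩
    rw [Real.norm_eq_abs, Real.abs_exp]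
    exact hexp_le lam x
  have hint_fe : ∀ lam : ℝ, Integrable (fun x => φ x * Real.exp (-lam * φ x)) μ := by
    intro lam
    refine ⟨(hφm.mul ((hφm.const_mul (-lam)).exp)).aestronglyMeasurable,
      HasFiniteIntegral.of_bounded (C := Cφ * Real.exp (|lam| * Cφ)) (ae_of_all _ fun x => ?_)⟩
    rw [Real.norm_eq_abs, abs_mul, Real.abs_exp]
    exact mul_le_mul (hφb x) (hexp_le lam x) (Real.exp_pos _).le hCpos
  have hUpos : 0 < (μ Set.univ).toReal := ENNReal.toReal_pos hμ.ne' (measure_ne_top μ _)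
  have hDpos : ∀ lam : ℝ, 0 < lam → 0 < ∫ p, Real.exp (-lam * φ p) ∂μ := by
    intro lam hlam
    have h1 : 0 < (μ Set.univ).toReal * Real.exp (-lam * Cφ) := mul_pos hUpos (Real.exp_pos _)
    refine lt_of_lt_of_le h1 ?_
    calc (μ Set.univ).toReal * Real.exp (-lam * Cφ) = ∫ _p, Real.exp (-lam * Cφ) ∂μ := by
          rw [integral_const, smul_eq_mul, measureReal_def]
      _ ≤ ∫ p, Real.exp (-lam * φ p) ∂μ := by
          refine integral_mono (integrable_const _) (hint_e lam) fun x => ?_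
          exact Real.exp_le_exp.2 (by nlinarith [le_of_abs_le (hφb x)])
  have hexpand : ∀ lam : ℝ, ∫ p, (φ p - m) * Real.exp (-lam * φ p) ∂μ
      = (∫ p, φ p * Real.exp (-lam * φ p) ∂μ) - m * ∫ p, Real.exp (-lam * φ p) ∂μ := by
    intro lam
    simp_rw [sub_mul]
    rw [integral_sub (hint_fe lam) ((hint_e lam).const_mul m), integral_const_mul]
  have hkey : ∀ lam : ℝ, 0 ≤ ∫ p, (φ p - m) * Real.exp (-lam * φ p) ∂μ := fun lam =>
    integral_nonneg_of_ae (hml.mono fun x hx => mul_nonneg (by linarith) (Real.exp_pos _).le)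
  have hpart1 : ∀ lam : ℝ, 0 < lam →
      m ≤ (∫ p, φ p * Real.exp (-lam * φ p) ∂μ) / (∫ p, Real.exp (-lam * φ p) ∂μ) := by
    intro lam hlam
    rw [le_div_iff₀ (hDpos lam hlam)]
    have := hkey lam
    rw [hexpand lam] at this
    linarith
  refine ⟨hpart1, ?_⟩
  rw [Metric.tendsto_atTop]
  intro ε hε
  set δ := ε / 3 with hδdef
  have hδpos : 0 < δ := by positivity
  set S := {x | φ x < m + δ / 2} with hSdef
  have hSmeas : MeasurableSet S := measurableSet_lt hφm measurable_const
  have hSne : μ S ≠ 0 := by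
    intro h0
    have hae : ∀ᵐ x ∂μ, m + δ / 2 ≤ φ x := by
      rw [ae_iff]
      simpa [S, not_le] using h0
    have := hle_essInf _ hae
    linarith
  have hSpos : 0 < (μ S).toReal := ENNReal.toReal_pos hSne (measure_ne_top μ _)
  set K := 2 * Cφ * (μ Set.univ).toReal / (μ S).toReal with hKdef
  have hKnonneg : 0 ≤ K :=
    div_nonneg (mul_nonneg (by linarith) ENNReal.toReal_nonneg) ENNReal.toReal_nonneg
  have htend : Tendsto (fun lam : ℝ => K * Real.exp (-(lam * (δ / 2)))) atTop (nhds 0) := by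
    have h1 : Tendsto (fun lam : ℝ => -(lam * (δ / 2))) atTop atBot :=
      tendsto_neg_atTop_atBot.comp (tendsto_id.atTop_mul_const (by positivity))
    have h2 := Real.tendsto_exp_atBot.comp h1
    simpa using h2.const_mul K
  have hev : ∀ᶠ lam : ℝ in atTop, K * Real.exp (-(lam * (δ / 2))) < δ :=
    htend.eventually_lt_const hδpos
  obtain ⟨N, hN⟩ := eventually_atTop.1 (hev.and (eventually_ge_atTop (1 : ℝ)))
  refine ⟨N, fun lam hlam => ?_⟩
  obtain ⟨hKe, hlam1⟩ := hN lam hlam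
  have hlam0 : (0 : ℝ) < lam := lt_of_lt_of_le one_pos hlam1
  have hD := hDpos lam hlam0
  -- numerator bound
  have hnum : ∫ p, (φ p - m) * Real.exp (-lam * φ p) ∂μ
      ≤ δ * (∫ p, Real.exp (-lam * φ p) ∂μ)
        + 2 * Cφ * Real.exp (-lam * (m + δ)) * (μ Set.univ).toReal := by
    have hb : ∀ᵐ x ∂μ, (φ x - m) * Real.exp (-lam * φ x)
        ≤ δ * Real.exp (-lam * φ x) + 2 * Cφ * Real.exp (-lam * (m + δ)) := by
      filter_upwards [hml] with x hx
      rcases le_or_gt (φ x - m) δ with h | h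
      · have h1 : (φ x - m) * Real.exp (-lam * φ x) ≤ δ * Real.exp (-lam * φ x) :=
          mul_le_mul_of_nonneg_right h (Real.exp_pos _).le
        nlinarith [Real.exp_pos (-lam * (m + δ))]
      · have h1 : Real.exp (-lam * φ x) ≤ Real.exp (-lam * (m + δ)) :=
          Real.exp_le_exp.2 (by nlinarith)
        have h2 : φ x - m ≤ 2 * Cφ := by
          have := le_of_abs_le (hφb x); linarith
        have h3 : (φ x - m) * Real.exp (-lam * φ x) ≤ 2 * Cφ * Real.exp (-lam * (m + δ)) :=
          mul_le_mul h2 h1 (Real.exp_pos _).le (by linarith)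
        nlinarith [mul_pos hδpos (Real.exp_pos (-lam * φ x))]
    have hlhs : Integrable (fun p => (φ p - m) * Real.exp (-lam * φ p)) μ := by
      simpa [sub_mul, Pi.sub_def] using (hint_fe lam).sub ((hint_e lam).const_mul m)
    have hrhs : Integrable
        (fun p => δ * Real.exp (-lam * φ p) + 2 * Cφ * Real.exp (-lam * (m + δ))) μ :=
      ((hint_e lam).const_mul δ).add (integrable_const _)
    calc ∫ p, (φ p - m) * Real.exp (-lam * φ p) ∂μ
        ≤ ∫ p, (δ * Real.exp (-lam * φ p) + 2 * Cφ * Real.exp (-lam * (m + δ))) ∂μ :=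
          integral_mono_ae hlhs hrhs hb
      _ = δ * (∫ p, Real.exp (-lam * φ p) ∂μ)
          + 2 * Cφ * Real.exp (-lam * (m + δ)) * (μ Set.univ).toReal := by
          rw [integral_add ((hint_e lam).const_mul δ) (integrable_const _),
            integral_const_mul, integral_const, smul_eq_mul, measureReal_def]
          ring
  -- denominator lower bound
  have hDlb : Real.exp (-lam * (m + δ / 2)) * (μ S).toReal ≤ ∫ p, Real.exp (-lam * φ p) ∂μ := by
    have h1 : ∫ x in S, Real.exp (-lam * (m + δ / 2)) ∂μ ≤ ∫ x in S, Real.exp (-lam * φ x) ∂μ := by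
      refine setIntegral_mono_on (integrableOn_const (measure_ne_top μ S))
        ((hint_e lam).integrableOn) hSmeas fun x hx => ?_
      have hxlt : φ x < m + δ / 2 := hx
      exact Real.exp_le_exp.2 (by nlinarith)
    have h2 : ∫ x in S, Real.exp (-lam * φ x) ∂μ ≤ ∫ p, Real.exp (-lam * φ p) ∂μ :=
      setIntegral_le_integral (hint_e lam) (ae_of_all _ fun x => (Real.exp_pos _).le)
    calc Real.exp (-lam * (m + δ / 2)) * (μ S).toReal
        = ∫ _x in S, Real.exp (-lam * (m + δ / 2)) ∂μ := by
          rw [setIntegral_const, smul_eq_mul, mul_comm, measureReal_def]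
      _ ≤ ∫ x in S, Real.exp (-lam * φ x) ∂μ := h1
      _ ≤ ∫ p, Real.exp (-lam * φ p) ∂μ := h2
  have hDlb' : 0 < Real.exp (-lam * (m + δ / 2)) * (μ S).toReal :=
    mul_pos (Real.exp_pos _) hSpos
  -- combine
  set D := ∫ p, Real.exp (-lam * φ p) ∂μ with hDdef
  set Nm := ∫ p, φ p * Real.exp (-lam * φ p) ∂μ with hNdef
  have hfrac : Nm / D - m ≤ δ + K * Real.exp (-(lam * (δ / 2))) := by
    have h0 : Nm / D - m = (∫ p, (φ p - m) * Real.exp (-lam * φ p) ∂μ) / D := by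
      rw [hexpand lam, sub_div, mul_div_assoc, div_self hD.ne', mul_one]
    rw [h0]
    calc (∫ p, (φ p - m) * Real.exp (-lam * φ p) ∂μ) / D
        ≤ (δ * D + 2 * Cφ * Real.exp (-lam * (m + δ)) * (μ Set.univ).toReal) / D := by
          gcongr
      _ = δ + (2 * Cφ * Real.exp (-lam * (m + δ)) * (μ Set.univ).toReal) / D := by
          rw [add_div, mul_div_assoc, div_self hD.ne', mul_one]
      _ ≤ δ + (2 * Cφ * Real.exp (-lam * (m + δ)) * (μ Set.univ).toReal)
            / (Real.exp (-lam * (m + δ / 2)) * (μ S).toReal) := by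
          gcongr
      _ = δ + K * Real.exp (-(lam * (δ / 2))) := by
          have hexp : Real.exp (-lam * (m + δ)) =
              Real.exp (-(lam * (δ / 2))) * Real.exp (-lam * (m + δ / 2)) := by
            rw [← Real.exp_add]; ring_nf
          rw [hKdef, hexp]
          field_simp [hSpos.ne']
  have hge : 0 ≤ Nm / D - m := sub_nonneg.2 (hpart1 lam hlam0)
  have : Nm / D - m < ε := by
    have : Nm / D - m < δ + δ := lt_of_le_of_lt hfrac (by linarith)
    linarith
  rw [Real.dist_eq, abs_of_nonneg hge]
  exact this
end

section
/- Let c, K > 0 be real numbers, let d ≥ 1 be a natural number, and let A, B : ℝ → ℝ be functions such that, as λ → ∞, A(λ) = c + K/λ + O(1/λ²) and B(λ) = c − (d/2)·(log λ)/λ + O(1/λ). Define the weights α(λ) = d·log λ / (2K + d·log λ) and β(λ) = 2K / (2K + d·log λ). Then α(λ)·A(λ) + β(λ)·B(λ) − c = O(1/(λ·log λ)) as λ → ∞; in particular the combined estimator has asymptotically smaller error than each of A and B. -/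
open Real Filter Asymptotics

/-- If A(λ) = c + K/λ + O(1/λ²) and B(λ) = c − (d/2)·(log λ)/λ + O(1/λ)
as λ → ∞, then with weights α(λ) = d·log λ/(2K + d·log λ) and
β(λ) = 2K/(2K + d·log λ), the blend satisfies
α(λ)·A(λ) + β(λ)·B(λ) − c = O(1/(λ·log λ)) as λ → ∞. -/
theorem blended_estimator_error
    (c K : ℝ) (hc : 0 < c) (hK : 0 < K) (d : ℕ) (hd : 1 ≤ d) (A B : ℝ → ℝ)
    (hA : (fun lam : ℝ => A lam - (c + K / lam)) =O[atTop] fun lam : ℝ => 1 / lam ^ 2)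
    (hB : (fun lam : ℝ => B lam - (c - (d / 2 : ℝ) * Real.log lam / lam)) =O[atTop]
      fun lam : ℝ => 1 / lam) :
    (fun lam : ℝ =>
        (d * Real.log lam / (2 * K + d * Real.log lam)) * A lam +
          (2 * K / (2 * K + d * Real.log lam)) * B lam - c) =O[atTop]
      fun lam : ℝ => 1 / (lam * Real.log lam) := by
  have hd1 : (1 : ℝ) ≤ (d : ℝ) := by exact_mod_cast hd
  have hEv : ∀ᶠ lam : ℝ in atTop, 1 < Real.log lam ∧ 1 < lam := by
    filter_upwards [eventually_gt_atTop (Real.exp 1), eventually_gt_atTop 1] with lam h1 h2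
    refine ⟨?_, h2⟩
    rw [Real.lt_log_iff_exp_lt (by linarith)]
    exact h1
  -- α is O(1)
  have hα : (fun lam : ℝ => d * Real.log lam / (2 * K + d * Real.log lam))
      =O[atTop] (fun _ : ℝ => (1 : ℝ)) := by
    refine IsBigO.of_bound 1 ?_
    filter_upwards [hEv] with lam ⟨hl, _⟩
    have hnum : (0:ℝ) ≤ d * Real.log lam := by positivity
    have hden : (0:ℝ) < 2 * K + d * Real.log lam := by nlinarith
    rw [Real.norm_eq_abs, Real.norm_eq_abs, abs_of_nonneg (by positivity)]
    simp only [abs_one, one_mul]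
    rw [div_le_one hden]; linarith
  -- β is O(1/log)
  have hβ : (fun lam : ℝ => 2 * K / (2 * K + d * Real.log lam))
      =O[atTop] (fun lam : ℝ => 1 / Real.log lam) := by
    refine IsBigO.of_bound (2 * K) ?_
    filter_upwards [hEv] with lam ⟨hl, _⟩
    have hl0 : (0:ℝ) < Real.log lam := by linarith
    have hden : Real.log lam ≤ 2 * K + d * Real.log lam := by nlinarith
    rw [Real.norm_eq_abs, Real.norm_eq_abs, abs_of_nonneg (by positivity),
      abs_of_nonneg (by positivity)]
    rw [mul_one_div]
    exact div_le_div_of_nonneg_left (by positivity) hl0 hden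
  -- 1/λ² = O(1/(λ log λ))
  have hA' : (fun lam : ℝ => A lam - (c + K / lam)) =O[atTop]
      (fun lam : ℝ => 1 / (lam * Real.log lam)) := by
    refine hA.trans (IsBigO.of_bound 1 ?_)
    filter_upwards [hEv] with lam ⟨hl, hlam⟩
    have hl0 : (0:ℝ) < Real.log lam := by linarith
    have hlog_le : Real.log lam ≤ lam := by
      have := Real.log_le_sub_one_of_pos (by linarith : (0:ℝ) < lam)
      linarith
    rw [Real.norm_eq_abs, Real.norm_eq_abs, abs_of_nonneg (by positivity),
      abs_of_nonneg (by positivity), one_mul]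
    gcongr
    nlinarith
  have h1 : (fun lam : ℝ =>
      (d * Real.log lam / (2 * K + d * Real.log lam)) * (A lam - (c + K / lam)))
      =O[atTop] (fun lam : ℝ => 1 / (lam * Real.log lam)) := by
    have := hα.mul hA'
    simpa using this
  have h2 : (fun lam : ℝ =>
      (2 * K / (2 * K + d * Real.log lam)) *
        (B lam - (c - (d / 2 : ℝ) * Real.log lam / lam)))
      =O[atTop] (fun lam : ℝ => 1 / (lam * Real.log lam)) := by
    have := hβ.mul hB
    refine this.trans (IsBigO.of_bound 1 ?_)
    filter_upwards [hEv] with lam ⟨hl, hlam⟩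
    have : 1 / Real.log lam * (1 / lam) = 1 / (lam * Real.log lam) := by
      rw [div_mul_div_comm, one_mul, mul_comm]
    rw [this, one_mul]
  have hsum := h1.add h2
  refine hsum.congr' ?_ (EventuallyEq.refl _ _)
  filter_upwards [hEv] with lam ⟨hl, hlam⟩
  have hl0 : (0:ℝ) < Real.log lam := by linarith
  have hlam0 : lam ≠ 0 := by linarith
  have hden : (2 * K + d * Real.log lam) ≠ 0 := by nlinarith
  field_simp
  ring
end

section
/- Let v : (0,∞) → ℝ be twice differentiable with v(λ) > 0 for all λ > 0, and define u : (0,∞) → ℝ by u(s) = −s·log v(1/s). Then for every s > 0, writing λ = 1/s, the second-order Taylor extrapolation u(s) − s·u′(s) + (s²/2)·u″(s) equals −v′(λ)/v(λ) − (λ/2)·[ v″(λ)/v(λ) − (v′(λ)/v(λ))² ]. -/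
open Real

/-- For v : (0,∞) → ℝ twice differentiable and positive, and
u(s) = −s·log v(1/s), the second-order Taylor extrapolation
u(s) − s·u′(s) + (s²/2)·u″(s) equals, with λ = 1/s,
−v′(λ)/v(λ) − (λ/2)·[v″(λ)/v(λ) − (v′(λ)/v(λ))²]. -/
theorem second_order_taylor_extrapolation_eq
    (v : ℝ → ℝ) (hvd : ∀ lam : ℝ, 0 < lam → DifferentiableAt ℝ v lam)
    (hvd2 : ∀ lam : ℝ, 0 < lam → DifferentiableAt ℝ (deriv v) lam)
    (hvpos : ∀ lam : ℝ, 0 < lam → 0 < v lam)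
    (u : ℝ → ℝ) (hu : ∀ s : ℝ, 0 < s → u s = -s * Real.log (v (1 / s)))
    (s : ℝ) (hs : 0 < s) :
    u s - s * deriv u s + s ^ 2 / 2 * deriv (deriv u) s =
      -deriv v (1 / s) / v (1 / s) -
        (1 / s) / 2 *
          (deriv (deriv v) (1 / s) / v (1 / s) -
            (deriv v (1 / s) / v (1 / s)) ^ 2) := by
  set φ : ℝ → ℝ := fun t => -Real.log (v t⁻¹) + t⁻¹ * (deriv v t⁻¹ / v t⁻¹) with hφ
  -- first derivative
  have hA : ∀ t : ℝ, 0 < t → HasDerivAt u (φ t) t := by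
    intro t ht
    have htinv : (0:ℝ) < t⁻¹ := by positivity
    have hinv : HasDerivAt (fun y : ℝ => y⁻¹) (-((t:ℝ)^2)⁻¹) t := hasDerivAt_inv ht.ne'
    have hv1 : HasDerivAt (fun y : ℝ => v y⁻¹) (deriv v t⁻¹ * -((t:ℝ)^2)⁻¹) t :=
      ((hvd t⁻¹ htinv).hasDerivAt).comp t hinv
    have hlog : HasDerivAt (fun y : ℝ => Real.log (v y⁻¹))
        (deriv v t⁻¹ * -((t:ℝ)^2)⁻¹ / v t⁻¹) t := hv1.log (hvpos _ htinv).ne'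
    have hf : HasDerivAt (fun y : ℝ => -y * Real.log (v y⁻¹))
        (-1 * Real.log (v t⁻¹) + -t * (deriv v t⁻¹ * -((t:ℝ)^2)⁻¹ / v t⁻¹)) t :=
      ((hasDerivAt_id t).neg.mul hlog)
    have heq : u =ᶠ[nhds t] fun y : ℝ => -y * Real.log (v y⁻¹) := by
      filter_upwards [isOpen_Ioi.mem_nhds ht] with x hx
      rw [hu x hx, one_div]
    have := hf.congr_of_eventuallyEq heq
    convert this using 1
    case e'_4 => rfl
    · rfl
    have hv : v t⁻¹ ≠ 0 := (hvpos _ htinv).ne'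
    have hv' : v (1 / t) ≠ 0 := by rw [one_div]; exact hv
    simp only [hφ]
    field_simp
  have hdu : ∀ t : ℝ, 0 < t → deriv u t = φ t := fun t ht => (hA t ht).deriv
  -- second derivative
  have hsinv : (0:ℝ) < s⁻¹ := by positivity
  have hvne : v s⁻¹ ≠ 0 := (hvpos _ hsinv).ne'
  have hinv : HasDerivAt (fun y : ℝ => y⁻¹) (-((s:ℝ)^2)⁻¹) s := hasDerivAt_inv hs.ne'
  have hv1 : HasDerivAt (fun y : ℝ => v y⁻¹) (deriv v s⁻¹ * -((s:ℝ)^2)⁻¹) s :=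
    ((hvd s⁻¹ hsinv).hasDerivAt).comp s hinv
  have hv2 : HasDerivAt (fun y : ℝ => deriv v y⁻¹)
      (deriv (deriv v) s⁻¹ * -((s:ℝ)^2)⁻¹) s :=
    ((hvd2 s⁻¹ hsinv).hasDerivAt).comp s hinv
  have hlog : HasDerivAt (fun y : ℝ => Real.log (v y⁻¹))
      (deriv v s⁻¹ * -((s:ℝ)^2)⁻¹ / v s⁻¹) s := hv1.log hvne
  have hratio : HasDerivAt (fun y : ℝ => deriv v y⁻¹ / v y⁻¹)
      ((deriv (deriv v) s⁻¹ * -((s:ℝ)^2)⁻¹ * v s⁻¹ -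
        deriv v s⁻¹ * (deriv v s⁻¹ * -((s:ℝ)^2)⁻¹)) / (v s⁻¹) ^ 2) s :=
    hv2.div hv1 hvne
  have hB : HasDerivAt φ
      (-(deriv v s⁻¹ * -((s:ℝ)^2)⁻¹ / v s⁻¹) +
        (-((s:ℝ)^2)⁻¹ * (deriv v s⁻¹ / v s⁻¹) + s⁻¹ *
          ((deriv (deriv v) s⁻¹ * -((s:ℝ)^2)⁻¹ * v s⁻¹ -
            deriv v s⁻¹ * (deriv v s⁻¹ * -((s:ℝ)^2)⁻¹)) / (v s⁻¹) ^ 2))) s :=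
    hlog.neg.add (hinv.mul hratio)
  have hdu2 : deriv (deriv u) s =
      -(deriv v s⁻¹ * -((s:ℝ)^2)⁻¹ / v s⁻¹) +
        (-((s:ℝ)^2)⁻¹ * (deriv v s⁻¹ / v s⁻¹) + s⁻¹ *
          ((deriv (deriv v) s⁻¹ * -((s:ℝ)^2)⁻¹ * v s⁻¹ -
            deriv v s⁻¹ * (deriv v s⁻¹ * -((s:ℝ)^2)⁻¹)) / (v s⁻¹) ^ 2)) := by
    have heq : deriv u =ᶠ[nhds s] φ := by
      filter_upwards [isOpen_Ioi.mem_nhds hs] with x hx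
      exact hdu x hx
    rw [heq.deriv_eq]
    exact hB.deriv
  rw [hu s hs, hdu s hs, hdu2, hφ, one_div]
  have hvne' : v (1 / s) ≠ 0 := by rw [one_div]; exact hvne
  field_simp
  ring
end
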